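/- Let d be a strict negative type metric on [N] with peel distribution p* maximizing p ↦ p^T d p over the probability simplex. If (d p*)_j > max_{k ∉ supp(p*)} (d p*)_k for all j ∈ supp(p*), then there is ε > 0 such that every strict negative type metric d' with ‖d' - d‖_op < ε satisfies supp(p*(d')) = supp(p*(d)). -/

import Mathlib

open Matrix BigOperators

namespace Stmt7Aux
variable {N : ℕ}

lemma dot_symm (A : Matrix (Fin N) (Fin N) ℝ) (hA : A.IsSymm) (x y : Fin N → ℝ) :
    x ⬝ᵥ A.mulVec y = y ⬝ᵥ A.mulVec x := by
  simp only [dotProduct, mulVec, Finset.mul_sum]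
  rw [Finset.sum_comm]
  refine Finset.sum_congr rfl fun j _ => Finset.sum_congr rfl fun i _ => ?_
  rw [hA.apply i j]; ring

lemma quad_add (A : Matrix (Fin N) (Fin N) ℝ) (hA : A.IsSymm) (x y : Fin N → ℝ) :
    (x + y) ⬝ᵥ A.mulVec (x + y)
      = x ⬝ᵥ A.mulVec x + 2 * (y ⬝ᵥ A.mulVec x) + y ⬝ᵥ A.mulVec y := by
  rw [mulVec_add, dotProduct_add, add_dotProduct, add_dotProduct,
    dot_symm A hA x y]
  ring

lemma abs_dot_le (x y : Fin N → ℝ) :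
    |x ⬝ᵥ y| ≤ Real.sqrt (∑ i, x i ^ 2) * Real.sqrt (∑ i, y i ^ 2) := by
  have h := Finset.sum_mul_sq_le_sq_mul_sq Finset.univ x y
  have h2 := Real.sqrt_le_sqrt h
  rwa [Real.sqrt_sq_eq_abs, Real.sqrt_mul (by positivity)] at h2

lemma abs_entry_le (x : Fin N → ℝ) (i : Fin N) :
    |x i| ≤ Real.sqrt (∑ j, x j ^ 2) := by
  rw [← Real.sqrt_sq_eq_abs]
  exact Real.sqrt_le_sqrt (Finset.single_le_sum (f := fun j => x j ^ 2)
    (fun j _ => by positivity) (Finset.mem_univ i))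

lemma abs_mulVec_entry_le (A : Matrix (Fin N) (Fin N) ℝ) (x : Fin N → ℝ) (i : Fin N) :
    |A.mulVec x i| ≤ Real.sqrt (∑ k, ∑ j, A k j ^ 2) * Real.sqrt (∑ j, x j ^ 2) := by
  have h1 : |A.mulVec x i| ≤ Real.sqrt (∑ j, A i j ^ 2) * Real.sqrt (∑ j, x j ^ 2) :=
    abs_dot_le (fun j => A i j) x
  refine h1.trans (mul_le_mul_of_nonneg_right (Real.sqrt_le_sqrt ?_) (Real.sqrt_nonneg _))
  exact Finset.single_le_sum (f := fun k => ∑ j, A k j ^ 2)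
    (fun k _ => by positivity) (Finset.mem_univ i)

lemma simplex_sq_le_one {q : Fin N → ℝ} (hq : q ∈ stdSimplex ℝ (Fin N)) :
    ∑ i, q i ^ 2 ≤ 1 := by
  obtain ⟨hq0, hq1⟩ := hq
  calc ∑ i, q i ^ 2 ≤ ∑ i, q i := by
        refine Finset.sum_le_sum fun i _ => ?_
        have hle : q i ≤ 1 := by
          rw [← hq1]
          exact Finset.single_le_sum (fun j _ => hq0 j) (Finset.mem_univ i)
        nlinarith [hq0 i]
    _ = 1 := hq1

lemma first_order (A : Matrix (Fin N) (Fin N) ℝ) (hA : A.IsSymm) (p : Fin N → ℝ)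
    (hmax : ∀ q ∈ stdSimplex ℝ (Fin N), q ⬝ᵥ A.mulVec q ≤ p ⬝ᵥ A.mulVec p)
    (v : Fin N → ℝ) (t0 : ℝ) (ht0 : 0 < t0)
    (hfeas : ∀ t : ℝ, 0 < t → t ≤ t0 → p + t • v ∈ stdSimplex ℝ (Fin N)) :
    v ⬝ᵥ A.mulVec p ≤ 0 := by
  set L := v ⬝ᵥ A.mulVec p with hL
  set Q := v ⬝ᵥ A.mulVec v with hQ
  have key : ∀ t : ℝ, 0 < t → t ≤ t0 → 2 * t * L + t ^ 2 * Q ≤ 0 := by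
    intro t ht ht0'
    have h := hmax _ (hfeas t ht ht0')
    have hexp : (p + t • v) ⬝ᵥ A.mulVec (p + t • v)
        = p ⬝ᵥ A.mulVec p + 2 * (t * L) + t ^ 2 * Q := by
      rw [quad_add A hA p (t • v)]
      simp only [mulVec_smul, smul_dotProduct, dotProduct_smul, smul_eq_mul]
      ring
    nlinarith [hexp ▸ h]
  by_contra hcon
  push_neg at hcon
  rcases le_or_gt 0 Q with hQ0 | hQ0
  · have := key t0 ht0 le_rfl
    nlinarith
  · have ht : 0 < min t0 (L / (-Q)) := lt_min ht0 (div_pos hcon (by linarith))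
    have hk := key _ ht (min_le_left _ _)
    have h2 : min t0 (L / (-Q)) ≤ L / (-Q) := min_le_right _ _
    have h3 : min t0 (L / (-Q)) * (-Q) ≤ L := by
      rw [← le_div_iff₀ (by linarith : (0:ℝ) < -Q)]
      exact h2
    nlinarith [mul_pos ht hcon]

lemma sum_sq_pos {x : Fin N → ℝ} (hx : x ≠ 0) : 0 < ∑ i, x i ^ 2 := by
  obtain ⟨i, hi⟩ := Function.ne_iff.mp hx
  exact Finset.sum_pos' (fun j _ => by positivity)
    ⟨i, Finset.mem_univ i, by simp at hi ⊢; positivity⟩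

lemma quad_smul (A : Matrix (Fin N) (Fin N) ℝ) (c : ℝ) (y : Fin N → ℝ) :
    (c • y) ⬝ᵥ A.mulVec (c • y) = c ^ 2 * (y ⬝ᵥ A.mulVec y) := by
  rw [mulVec_smul, dotProduct_smul, smul_dotProduct]
  simp [smul_eq_mul]; ring

lemma gamma_exists (A : Matrix (Fin N) (Fin N) ℝ)
    (hSNT : ∀ x : Fin N → ℝ, x ≠ 0 → ∑ i, x i = 0 → x ⬝ᵥ A.mulVec x < 0) :
    ∃ γ > 0, ∀ x : Fin N → ℝ, ∑ i, x i = 0 →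
      x ⬝ᵥ A.mulVec x ≤ -γ * ∑ i, x i ^ 2 := by
  set K : Set (Fin N → ℝ) := {x | ∑ i, x i ^ 2 = 1 ∧ ∑ i, x i = 0} with hKdef
  set f : (Fin N → ℝ) → ℝ := fun x => x ⬝ᵥ A.mulVec x with hfdef
  have hfcont : Continuous f := by
    have : f = fun x => ∑ i, x i * ∑ j, A i j * x j := rfl
    rw [this]
    exact continuous_finset_sum _ fun i _ => (continuous_apply i).mul
      (continuous_finset_sum _ fun j _ => continuous_const.mul (continuous_apply j))
  have hnorm : ∀ x : Fin N → ℝ, x ≠ 0 → ∑ i, x i = 0 →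
      (Real.sqrt (∑ i, x i ^ 2))⁻¹ • x ∈ K := by
    intro x hx hsum
    have hpos := sum_sq_pos hx
    have hc : Real.sqrt (∑ i, x i ^ 2) > 0 := Real.sqrt_pos.mpr hpos
    constructor
    · have : ∑ i, ((Real.sqrt (∑ j, x j ^ 2))⁻¹ • x) i ^ 2
          = (Real.sqrt (∑ j, x j ^ 2))⁻¹ ^ 2 * ∑ i, x i ^ 2 := by
        rw [Finset.mul_sum]
        simp only [Pi.smul_apply, smul_eq_mul, mul_pow]
      rw [this, inv_pow, Real.sq_sqrt hpos.le]
      field_simp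
    · simp only [Pi.smul_apply, smul_eq_mul, ← Finset.mul_sum, hsum, mul_zero]
  by_cases hK : K.Nonempty
  · have hclosed : IsClosed K := by
      apply IsClosed.inter
      · exact isClosed_eq (continuous_finset_sum _ fun i _ => (continuous_apply i).pow 2)
          continuous_const
      · exact isClosed_eq (continuous_finset_sum _ fun i _ => continuous_apply i)
          continuous_const
    have hbdd : Bornology.IsBounded K := by
      apply Bornology.IsBounded.subset (Metric.isBounded_closedBall (x := (0 : Fin N → ℝ)) (r := 1))
      intro x hx
      rw [Metric.mem_closedBall, dist_zero_right]
      rw [pi_norm_le_iff_of_nonneg zero_le_one]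
      intro i
      have h1 : x i ^ 2 ≤ 1 := by
        rw [← hx.1]
        exact Finset.single_le_sum (f := fun j => x j ^ 2) (fun j _ => by positivity)
          (Finset.mem_univ i)
      rw [Real.norm_eq_abs, abs_le]
      constructor <;> nlinarith
    have hcomp : IsCompact K := Metric.isCompact_of_isClosed_isBounded hclosed hbdd
    obtain ⟨z, hzK, hzmax⟩ := hcomp.exists_isMaxOn hK hfcont.continuousOn
    have hz0 : z ≠ 0 := by
      intro h
      rw [h] at hzK
      obtain ⟨h1, -⟩ := hzK
      simp only [Pi.zero_apply, ne_eq, OfNat.ofNat_ne_zero, not_false_eq_true,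
        zero_pow, Finset.sum_const_zero] at h1
      exact one_ne_zero h1.symm
    have hfz : f z < 0 := hSNT z hz0 hzK.2
    refine ⟨-(f z), by linarith, fun x hsum => ?_⟩
    by_cases hx : x = 0
    · simp [hx]
    · set c := Real.sqrt (∑ i, x i ^ 2) with hc
      have hpos := sum_sq_pos hx
      have hcpos : 0 < c := Real.sqrt_pos.mpr hpos
      have hyK := hnorm x hx hsum
      have hfy : f (c⁻¹ • x) ≤ f z := hzmax hyK
      have hx_eq : x = c • (c⁻¹ • x) := by
        rw [smul_smul, mul_inv_cancel₀ hcpos.ne', one_smul]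
      calc x ⬝ᵥ A.mulVec x = c ^ 2 * f (c⁻¹ • x) := by
            conv_lhs => rw [hx_eq]
            exact quad_smul A c (c⁻¹ • x)
        _ ≤ c ^ 2 * f z := by nlinarith
        _ = -(-(f z)) * (∑ i, x i ^ 2) := by
            rw [hc, Real.sq_sqrt hpos.le]; ring
  · refine ⟨1, one_pos, fun x hsum => ?_⟩
    by_cases hx : x = 0
    · simp [hx]
    · exact absurd ⟨_, hnorm x hx hsum⟩ hK

noncomputable def opSet (Δ : Matrix (Fin N) (Fin N) ℝ) : Set ℝ :=
  {v : ℝ | ∃ x : Fin N → ℝ, ∑ i, (x i) ^ 2 = 1 ∧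
    v = Real.sqrt (∑ i, (Δ.mulVec x i) ^ 2)}

lemma bddAbove_opSet (Δ : Matrix (Fin N) (Fin N) ℝ) : BddAbove (opSet Δ) := by
  refine ⟨Real.sqrt (∑ i, ∑ j, Δ i j ^ 2), fun v hv => ?_⟩
  obtain ⟨x, hx1, rfl⟩ := hv
  apply Real.sqrt_le_sqrt
  refine Finset.sum_le_sum fun i _ => ?_
  have h := Finset.sum_mul_sq_le_sq_mul_sq Finset.univ (fun j => Δ i j) x
  rw [hx1, mul_one] at h
  exact h

lemma opSet_sSup_nonneg [Nonempty (Fin N)] (Δ : Matrix (Fin N) (Fin N) ℝ) :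
    0 ≤ sSup (opSet Δ) := by
  obtain ⟨i0⟩ := ‹Nonempty (Fin N)›
  have hmem' : Real.sqrt (∑ i, (Δ.mulVec (Pi.single i0 1) i) ^ 2) ∈ opSet Δ := by
    refine ⟨Pi.single i0 1, ?_, rfl⟩
    rw [Finset.sum_eq_single i0]
    · simp
    · intro j _ hj; rw [Pi.single_eq_of_ne hj]; ring
    · intro h; exact absurd (Finset.mem_univ i0) h
  exact le_trans (Real.sqrt_nonneg _) (le_csSup (bddAbove_opSet Δ) hmem')

lemma mulVec_norm_le [Nonempty (Fin N)] (Δ : Matrix (Fin N) (Fin N) ℝ) (x : Fin N → ℝ) :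
    Real.sqrt (∑ i, (Δ.mulVec x i) ^ 2)
      ≤ sSup (opSet Δ) * Real.sqrt (∑ i, x i ^ 2) := by
  by_cases hx : x = 0
  · simp [hx, Matrix.mulVec_zero]
  · have hpos : 0 < ∑ i, x i ^ 2 := sum_sq_pos hx
    set c := Real.sqrt (∑ i, x i ^ 2) with hc
    have hcpos : 0 < c := Real.sqrt_pos.mpr hpos
    have hmem : Real.sqrt (∑ i, (Δ.mulVec (c⁻¹ • x) i) ^ 2) ∈ opSet Δ := by
      refine ⟨c⁻¹ • x, ?_, rfl⟩
      have : ∑ i, (c⁻¹ • x) i ^ 2 = c⁻¹ ^ 2 * ∑ i, x i ^ 2 := by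
        rw [Finset.mul_sum]
        simp only [Pi.smul_apply, smul_eq_mul, mul_pow]
      rw [this, inv_pow, Real.sq_sqrt hpos.le]
      field_simp
    have hle := le_csSup (bddAbove_opSet Δ) hmem
    have heq : Real.sqrt (∑ i, (Δ.mulVec x i) ^ 2)
        = c * Real.sqrt (∑ i, (Δ.mulVec (c⁻¹ • x) i) ^ 2) := by
      have hxeq : Δ.mulVec x = c • Δ.mulVec (c⁻¹ • x) := by
        rw [Matrix.mulVec_smul, smul_smul, mul_inv_cancel₀ hcpos.ne', one_smul]
      rw [hxeq]
      have : ∑ i, (c • Δ.mulVec (c⁻¹ • x)) i ^ 2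
          = c ^ 2 * ∑ i, (Δ.mulVec (c⁻¹ • x) i) ^ 2 := by
        rw [Finset.mul_sum]
        simp only [Pi.smul_apply, smul_eq_mul, mul_pow]
      rw [this, Real.sqrt_mul (by positivity), Real.sqrt_sq hcpos.le]
    rw [heq]
    calc c * Real.sqrt (∑ i, (Δ.mulVec (c⁻¹ • x) i) ^ 2) ≤ c * sSup (opSet Δ) :=
          mul_le_mul_of_nonneg_left hle hcpos.le
      _ = sSup (opSet Δ) * c := mul_comm _ _

end Stmt7Aux


set_option maxHeartbeats 1000000 in
open Stmt7Aux in
/-- Generic stability of peel supports: if the first-order optimality inequality is strict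
off the support of `p*(d)`, then all strict negative type metrics `d'` sufficiently close to
`d` in operator norm have the same peel support. -/
theorem stmt7 {N : ℕ} (d : Matrix (Fin N) (Fin N) ℝ)
    (hsymm : d.IsSymm) (hdiag : ∀ i, d i i = 0)
    (hpos : ∀ i j, i ≠ j → 0 < d i j)
    (htri : ∀ i j k, d i k ≤ d i j + d j k)
    (hSNT : ∀ x : Fin N → ℝ, x ≠ 0 → ∑ i, x i = 0 → x ⬝ᵥ d.mulVec x < 0)
    (p : Fin N → ℝ) (hp : p ∈ stdSimplex ℝ (Fin N))
    (hmax : ∀ q ∈ stdSimplex ℝ (Fin N), q ⬝ᵥ d.mulVec q ≤ p ⬝ᵥ d.mulVec p)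
    (hstrict : ∀ j k : Fin N, p j ≠ 0 → p k = 0 → d.mulVec p k < d.mulVec p j) :
    ∃ ε > 0, ∀ d' : Matrix (Fin N) (Fin N) ℝ,
      d'.IsSymm → (∀ i, d' i i = 0) → (∀ i j, i ≠ j → 0 < d' i j) →
      (∀ i j k, d' i k ≤ d' i j + d' j k) →
      (∀ x : Fin N → ℝ, x ≠ 0 → ∑ i, x i = 0 → x ⬝ᵥ d'.mulVec x < 0) →
      sSup {v : ℝ | ∃ x : Fin N → ℝ, ∑ i, (x i) ^ 2 = 1 ∧
        v = Real.sqrt (∑ i, ((d' - d).mulVec x i) ^ 2)} < ε →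
      ∀ p' : Fin N → ℝ, p' ∈ stdSimplex ℝ (Fin N) →
        (∀ q ∈ stdSimplex ℝ (Fin N), q ⬝ᵥ d'.mulVec q ≤ p' ⬝ᵥ d'.mulVec p') →
        {i : Fin N | p' i ≠ 0} = {i : Fin N | p i ≠ 0} := by
  -- Fin N is nonempty
  have hNne : Nonempty (Fin N) := by
    by_contra h
    haveI : IsEmpty (Fin N) := not_nonempty_iff.mp h
    have h2 := hp.2
    rw [Finset.univ_eq_empty, Finset.sum_empty] at h2
    exact zero_ne_one h2
  haveI := hNne
  obtain ⟨γ, hγ, hgam⟩ := gamma_exists d hSNT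
  have hj0 : ∃ j0, p j0 ≠ 0 := by
    by_contra h
    push_neg at h
    have h2 := hp.2
    simp only [h, Finset.sum_const_zero] at h2
    exact zero_ne_one h2
  obtain ⟨j0, hj0⟩ := hj0
  -- m : smallest positive entry of p
  set T : Finset (Fin N) := Finset.univ.filter (fun i => p i ≠ 0) with hTdef
  have hTne : T.Nonempty := ⟨j0, by simp [hTdef, hj0]⟩
  set m := T.inf' hTne p with hmdef
  have hm : 0 < m := by
    rw [hmdef, Finset.lt_inf'_iff]
    intro i hi
    rw [hTdef, Finset.mem_filter] at hi
    exact lt_of_le_of_ne (hp.1 i) (Ne.symm hi.2)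
  have hmle : ∀ i, p i ≠ 0 → m ≤ p i := fun i hi =>
    Finset.inf'_le p (by simp [hTdef, hi])
  -- δ : the strict first-order gap
  set U : Finset (Fin N) := Finset.univ.filter (fun k => p k = 0) with hUdef
  set δ : ℝ := if hU : U.Nonempty then U.inf' hU (fun k => d.mulVec p j0 - d.mulVec p k)
    else 1 with hδdef
  have hδpos : 0 < δ := by
    rw [hδdef]
    split
    · rename_i hU
      rw [Finset.lt_inf'_iff]
      intro k hk
      rw [hUdef, Finset.mem_filter] at hk
      have := hstrict j0 k hj0 hk.2
      linarith
    · exact one_pos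
  have hδle : ∀ k, p k = 0 → δ ≤ d.mulVec p j0 - d.mulVec p k := by
    intro k hk
    have hkU : k ∈ U := by simp [hUdef, hk]
    rw [hδdef, dif_pos ⟨k, hkU⟩]
    exact Finset.inf'_le _ hkU
  -- Frobenius-type constant for d
  set Cd : ℝ := Real.sqrt (∑ i, ∑ j, d i j ^ 2) with hCddef
  have hCd0 : 0 ≤ Cd := Real.sqrt_nonneg _
  set C : ℝ := Cd + 1 with hCdef
  have hC : 0 < C := by positivity
  refine ⟨min (γ * m ^ 2 / 8) (min (δ / 8) (γ * δ ^ 2 / (128 * C ^ 2))), by positivity, ?_⟩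
  intro d' hsymm' hdiag' hpos' htri' hSNT' hMlt p' hp' hmax'
  set ε := min (γ * m ^ 2 / 8) (min (δ / 8) (γ * δ ^ 2 / (128 * C ^ 2))) with hεdef
  have hε1 : ε ≤ γ * m ^ 2 / 8 := min_le_left _ _
  have hε2 : ε ≤ δ / 8 := le_trans (min_le_right _ _) (min_le_left _ _)
  have hε3 : ε ≤ γ * δ ^ 2 / (128 * C ^ 2) := le_trans (min_le_right _ _) (min_le_right _ _)
  set Δ : Matrix (Fin N) (Fin N) ℝ := d' - d with hΔdef
  set M : ℝ := sSup (opSet Δ) with hMdef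
  have hM : M < ε := hMlt
  have hM0 : 0 ≤ M := opSet_sSup_nonneg Δ
  have hsq1 : ∀ q ∈ stdSimplex ℝ (Fin N), Real.sqrt (∑ i, q i ^ 2) ≤ 1 := fun q hq =>
    Real.sqrt_le_one.mpr (simplex_sq_le_one hq)
  -- quadratic-form perturbation bound
  have hQΔ : ∀ q ∈ stdSimplex ℝ (Fin N), |q ⬝ᵥ Δ.mulVec q| ≤ M := by
    intro q hq
    have h4 : (0:ℝ) ≤ Real.sqrt (∑ i, q i ^ 2) := Real.sqrt_nonneg _
    calc |q ⬝ᵥ Δ.mulVec q| ≤ Real.sqrt (∑ i, q i ^ 2)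
          * Real.sqrt (∑ i, (Δ.mulVec q i) ^ 2) := abs_dot_le q (Δ.mulVec q)
      _ ≤ Real.sqrt (∑ i, q i ^ 2) * (M * Real.sqrt (∑ i, q i ^ 2)) :=
          mul_le_mul_of_nonneg_left (mulVec_norm_le Δ q) h4
      _ ≤ 1 * (M * 1) := by
          have h3 := hsq1 q hq
          have h5 := mul_le_mul_of_nonneg_left h3 hM0
          nlinarith
      _ = M := by ring
  have hQsplit : ∀ q : Fin N → ℝ, q ⬝ᵥ d'.mulVec q = q ⬝ᵥ d.mulVec q + q ⬝ᵥ Δ.mulVec q := by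
    intro q
    rw [hΔdef, Matrix.sub_mulVec, dotProduct_sub]
    ring
  -- x = p' - p, basic facts
  set x : Fin N → ℝ := p' - p with hxdef
  have hxsum : ∑ i, x i = 0 := by
    simp only [hxdef, Pi.sub_apply, Finset.sum_sub_distrib, hp.2, hp'.2, sub_self]
  have hxdp : x ⬝ᵥ d.mulVec p ≤ 0 := by
    refine first_order d hsymm p hmax x 1 one_pos fun t ht ht1 => ?_
    have heq : p + t • x = (1 - t) • p + t • p' := by
      funext i
      simp [hxdef, Pi.smul_apply, smul_eq_mul]
      ring
    rw [heq]
    exact convex_stdSimplex ℝ (Fin N) hp hp' (by linarith) ht.le (by ring)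
  have hquad : p' ⬝ᵥ d.mulVec p'
      = p ⬝ᵥ d.mulVec p + 2 * (x ⬝ᵥ d.mulVec p) + x ⬝ᵥ d.mulVec x := by
    have h := quad_add d hsymm p x
    rw [show p + x = p' by rw [hxdef]; abel] at h
    exact h
  -- closeness of the maximum values gives closeness of p' to p
  have h1 : p ⬝ᵥ d.mulVec p - 2 * M ≤ p' ⬝ᵥ d.mulVec p' := by
    have ha := hQΔ p hp
    have hb := hQΔ p' hp'
    have hc := hmax' p hp
    rw [hQsplit p, hQsplit p'] at hc
    rw [abs_le] at ha hb
    linarith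
  have hgx := hgam x hxsum
  set s : ℝ := ∑ i, x i ^ 2 with hsdef
  have hs0 : 0 ≤ s := by positivity
  have hsle : γ * s ≤ 2 * M := by
    have h2 := hmax p' hp'
    nlinarith
  -- entrywise perturbation of the gradient
  set η : ℝ := Real.sqrt s with hηdef
  have hη0 : 0 ≤ η := Real.sqrt_nonneg _
  have hη2 : η ^ 2 = s := Real.sq_sqrt hs0
  have hE : ∀ i, |d'.mulVec p' i - d.mulVec p i| ≤ M + Cd * η := by
    intro i
    have hdec : d'.mulVec p' i - d.mulVec p i = Δ.mulVec p' i + d.mulVec x i := by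
      rw [hΔdef, hxdef, Matrix.sub_mulVec, Matrix.mulVec_sub]
      simp only [Pi.sub_apply, Pi.add_apply]
      ring
    have hb1 : |Δ.mulVec p' i| ≤ M := by
      calc |Δ.mulVec p' i| ≤ Real.sqrt (∑ j, (Δ.mulVec p' j) ^ 2) := abs_entry_le _ i
        _ ≤ M * Real.sqrt (∑ j, p' j ^ 2) := mulVec_norm_le Δ p'
        _ ≤ M * 1 := mul_le_mul_of_nonneg_left (hsq1 p' hp') hM0
        _ = M := mul_one M
    have hb2 : |d.mulVec x i| ≤ Cd * η := by
      have h1 := abs_mulVec_entry_le d x i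
      rw [← hCddef, ← hsdef, ← hηdef] at h1
      exact h1
    calc |d'.mulVec p' i - d.mulVec p i| = |Δ.mulVec p' i + d.mulVec x i| := by rw [hdec]
      _ ≤ |Δ.mulVec p' i| + |d.mulVec x i| := abs_add_le _ _
      _ ≤ M + Cd * η := add_le_add hb1 hb2
  -- η is small
  have hCne : C ≠ 0 := hC.ne'
  have hηlt : η < δ / (8 * C) := by
    have h2 : s < δ ^ 2 / (64 * C ^ 2) := by
      have h3 : γ * s < 2 * (γ * δ ^ 2 / (128 * C ^ 2)) := by linarith
      have h4 : 2 * (γ * δ ^ 2 / (128 * C ^ 2)) = γ * (δ ^ 2 / (64 * C ^ 2)) := by field_simp; ring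
      rw [h4] at h3
      exact (mul_lt_mul_iff_right₀ hγ).mp h3
    have hcpos : (0:ℝ) < δ / (8 * C) := by positivity
    by_contra hcon
    push_neg at hcon
    have h5 : (δ / (8 * C)) ^ 2 ≤ η ^ 2 := by nlinarith
    have heq : (δ / (8 * C)) ^ 2 = δ ^ 2 / (64 * C ^ 2) := by field_simp; ring
    nlinarith
  have hxi_small : ∀ i, (x i) ^ 2 < m ^ 2 / 4 := by
    intro i
    have h1 : (x i) ^ 2 ≤ s := Finset.single_le_sum (f := fun j => x j ^ 2)
      (fun j _ => by positivity) (Finset.mem_univ i)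
    have h2 : γ * s < 2 * (γ * m ^ 2 / 8) := by linarith
    nlinarith
  -- support containment (a): supp p ⊆ supp p'
  have hsub1 : ∀ i, p i ≠ 0 → p' i ≠ 0 := by
    intro i hi
    have h1 := hmle i hi
    have h2 := hxi_small i
    have h3 : x i = p' i - p i := by rw [hxdef]; rfl
    intro hzero
    rw [hzero] at h3
    nlinarith
  -- support containment (b): supp p' ⊆ supp p
  have hsub2 : ∀ k, p k = 0 → p' k = 0 := by
    intro k hk
    by_contra hk'
    have hpk : 0 < p' k := lt_of_le_of_ne (hp'.1 k) (Ne.symm hk')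
    have hjk : j0 ≠ k := fun h => hj0 (h ▸ hk)
    set v : Fin N → ℝ := Pi.single j0 1 - Pi.single k 1 with hvdef
    have hfo : v ⬝ᵥ d'.mulVec p' ≤ 0 := by
      refine first_order d' hsymm' p' hmax' v (p' k) hpk fun t ht ht1 => ?_
      constructor
      · intro i
        simp only [Pi.add_apply, Pi.smul_apply, hvdef, Pi.sub_apply, smul_eq_mul,
          Pi.single_apply]
        rcases eq_or_ne i j0 with rfl | hij0
        · rw [if_pos rfl, if_neg hjk]
          have := hp'.1 i
          nlinarith
        · rw [if_neg hij0]
          rcases eq_or_ne i k with rfl | hik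
          · rw [if_pos rfl]
            have := hp'.1 i
            linarith
          · rw [if_neg hik]
            have := hp'.1 i
            linarith
      · have hvsum : ∑ i, v i = 0 := by
          simp only [hvdef, Pi.sub_apply, Finset.sum_sub_distrib]
          rw [Finset.sum_pi_single', Finset.sum_pi_single']
          simp
        calc ∑ i, (p' + t • v) i = ∑ i, (p' i + t * v i) := by
              refine Finset.sum_congr rfl fun i _ => ?_
              simp [Pi.smul_apply, smul_eq_mul]
          _ = (∑ i, p' i) + t * ∑ i, v i := by
              rw [Finset.sum_add_distrib, Finset.mul_sum]
          _ = 1 := by rw [hp'.2, hvsum]; ring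
    have hfo' : d'.mulVec p' j0 ≤ d'.mulVec p' k := by
      rw [hvdef, sub_dotProduct, single_dotProduct,
        single_dotProduct, one_mul, one_mul] at hfo
      linarith
    have hEj := hE j0
    have hEk := hE k
    rw [abs_le] at hEj hEk
    have hδk := hδle k hk
    have hMs : 2 * M < δ / 4 := by linarith
    have hCs : 2 * (Cd * η) < δ / 4 := by
      have : Cd * η ≤ C * η := by nlinarith
      have h2 : C * η < C * (δ / (8 * C)) := by
        apply mul_lt_mul_of_pos_left hηlt hC
      have h3 : C * (δ / (8 * C)) = δ / 8 := by field_simp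
      linarith
    linarith
  ext i
  simp only [Set.mem_setOf_eq]
  constructor
  · intro h hpi
    exact h (hsub2 i hpi)
  · exact hsub1 i
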